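/- Let 0 < w < 1 and 1/2 < θ < 1. If θ ≥ w and θ ≥ 2(1−w)/(2−w), then the premiss-based rule is optimal (L_w(r_pb) ≤ L_w(r) for every admissible rule r) for every odd committee size n = 2m+1, m ≥ 1. -/

import Mathlib

def tsum4 (T : ℕ × ℕ × ℕ × ℕ) : ℕ := T.1 + T.2.1 + T.2.2.1 + T.2.2.2

def tableStep (T S : ℕ × ℕ × ℕ × ℕ) : Prop :=
  (∃ x y z t : ℕ, T = (x, y, z, t + 1) ∧ S = (x, y, z + 1, t)) ∨
  (∃ x y z t : ℕ, T = (x, y, z, t + 1) ∧ S = (x, y + 1, z, t)) ∨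
  (∃ x y z t : ℕ, T = (x, y + 1, z, t) ∧ S = (x + 1, y, z, t)) ∨
  (∃ x y z t : ℕ, T = (x, y, z + 1, t) ∧ S = (x + 1, y, z, t))

def tableLe : ℕ × ℕ × ℕ × ℕ → ℕ × ℕ × ℕ × ℕ → Prop :=
  Relation.ReflTransGen tableStep

/-- A rule is admissible if it is invariant under transposition and order-preserving. -/
def Admissible (n : ℕ) (r : ℕ × ℕ × ℕ × ℕ → Fin 2) : Prop :=
  (∀ x y z t : ℕ, x + y + z + t = n → r (x, y, z, t) = r (x, z, y, t)) ∧
  (∀ T S : ℕ × ℕ × ℕ × ℕ, tsum4 T = n → tsum4 S = n → tableLe T S → r T ≤ r S)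

def tables (n : ℕ) : Finset (ℕ × ℕ × ℕ × ℕ) :=
  ((Finset.range (n+1)) ×ˢ (Finset.range (n+1)) ×ˢ (Finset.range (n+1)) ×ˢ
    (Finset.range (n+1))).filter (fun T => tsum4 T = n)

noncomputable def mcoef (n : ℕ) (T : ℕ × ℕ × ℕ × ℕ) : ℝ :=
  (n.factorial : ℝ) /
    (T.1.factorial * T.2.1.factorial * T.2.2.1.factorial * T.2.2.2.factorial)

/-- The loss `L_w(r) = w·ℙ_r(FP) + (1−w)·ℙ_r(FN)`. -/
noncomputable def loss (n : ℕ) (w θ : ℝ) (r : ℕ × ℕ × ℕ × ℕ → Fin 2) : ℝ :=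
  w * ∑ T ∈ (tables n).filter (fun T => r T = 1),
        mcoef n T * θ ^ (T.1 + 2*T.2.1 + T.2.2.2) * (1-θ) ^ (T.1 + 2*T.2.2.1 + T.2.2.2)
  + (1-w) * ∑ T ∈ (tables n).filter (fun T => r T = 0),
        mcoef n T * θ ^ (2*T.1 + T.2.1 + T.2.2.1) * (1-θ) ^ (T.2.1 + T.2.2.1 + 2*T.2.2.2)

/-- The premiss-based rule: decide `C` iff `x+y > z+t` and `x+z > y+t`. -/
def rulePB : ℕ × ℕ × ℕ × ℕ → Fin 2 := fun T =>
  if T.2.2.1 + T.2.2.2 < T.1 + T.2.1 ∧ T.2.1 + T.2.2.2 < T.1 + T.2.2.1 then 1 else 0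

lemma ineq1 {w θ : ℝ} (hw0 : 0 < w) (hw1 : w < 1) (hθ : 1/2 < θ) (hθ1 : θ < 1) (h1 : w ≤ θ)
    {k : ℕ} (hk : 1 ≤ k) : w * (1-θ)^k ≤ (1-w) * θ^k := by
  obtain ⟨k, rfl⟩ := Nat.exists_eq_add_of_le hk
  have h0 : (0:ℝ) ≤ 1 - θ := by linarith
  have hmono : (1-θ)^k ≤ θ^k := pow_le_pow_left₀ h0 (by linarith) k
  have hq : (0:ℝ) ≤ (1-θ)^k := pow_nonneg h0 k
  have key : w * (1-θ) ≤ (1-w) * θ := by ring_nf; linarith [hθ, h1]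
  calc w * (1-θ)^(1+k) = (w*(1-θ)) * (1-θ)^k := by ring
    _ ≤ ((1-w)*θ) * (1-θ)^k := by nlinarith
    _ ≤ ((1-w)*θ) * θ^k := by
        apply mul_le_mul_of_nonneg_left hmono; nlinarith
    _ = (1-w) * θ^(1+k) := by ring

lemma ineq2 {w θ : ℝ} (hw0 : 0 < w) (hw1 : w < 1) (hθ : 1/2 < θ) (hθ1 : θ < 1)
    (h2 : 2 * (1 - w) / (2 - w) ≤ θ) {k : ℕ} (hk : 1 ≤ k) :
    2 * (1-w) * (1-θ)^k ≤ w * θ^k := by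
  obtain ⟨k, rfl⟩ := Nat.exists_eq_add_of_le hk
  have h0 : (0:ℝ) ≤ 1 - θ := by linarith
  have hmono : (1-θ)^k ≤ θ^k := pow_le_pow_left₀ h0 (by linarith) k
  have hq : (0:ℝ) ≤ (1-θ)^k := pow_nonneg h0 k
  have h2w : (0:ℝ) < 2 - w := by linarith
  rw [div_le_iff₀ h2w] at h2
  have key : 2 * (1-w) * (1-θ) ≤ w * θ := by ring_nf; ring_nf at h2; linarith
  calc 2*(1-w) * (1-θ)^(1+k) = (2*(1-w)*(1-θ)) * (1-θ)^k := by ring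
    _ ≤ (w*θ) * (1-θ)^k := by nlinarith
    _ ≤ (w*θ) * θ^k := by
        apply mul_le_mul_of_nonneg_left hmono; nlinarith
    _ = w * θ^(1+k) := by ring

lemma gle {w θ : ℝ} (hw0 : 0 < w) (hw1 : w < 1) (hθ : 1/2 < θ) (hθ1 : θ < 1) (h1 : w ≤ θ)
    (x y z t : ℕ) (hd : y + t < x + z) :
    w * (θ^(x+2*y+t) * (1-θ)^(x+2*z+t)) ≤ (1-w) * (θ^(2*x+y+z) * (1-θ)^(y+z+2*t)) := by
  have e1 : 2*x+y+z = (x+2*y+t) + ((x+z)-(y+t)) := by omega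
  have e2 : x+2*z+t = (y+z+2*t) + ((x+z)-(y+t)) := by omega
  have hk : 1 ≤ (x+z)-(y+t) := by omega
  have key := ineq1 hw0 hw1 hθ hθ1 h1 hk
  have hPQ : (0:ℝ) ≤ θ^(x+2*y+t) * (1-θ)^(y+z+2*t) :=
    mul_nonneg (by positivity) (pow_nonneg (by linarith) _)
  calc w * (θ^(x+2*y+t) * (1-θ)^(x+2*z+t))
      = (θ^(x+2*y+t) * (1-θ)^(y+z+2*t)) * (w * (1-θ)^((x+z)-(y+t))) := by
        rw [e2, pow_add]; ring
    _ ≤ (θ^(x+2*y+t) * (1-θ)^(y+z+2*t)) * ((1-w) * θ^((x+z)-(y+t))) :=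
        mul_le_mul_of_nonneg_left key hPQ
    _ = (1-w) * (θ^(2*x+y+z) * (1-θ)^(y+z+2*t)) := by
        rw [e1, pow_add]; ring

lemma gge {w θ : ℝ} (hw0 : 0 < w) (hw1 : w < 1) (hθ : 1/2 < θ) (hθ1 : θ < 1)
    (h2 : 2 * (1 - w) / (2 - w) ≤ θ)
    (x y z t : ℕ) (hd : x + z < y + t) :
    2 * (1-w) * (θ^(2*x+y+z) * (1-θ)^(y+z+2*t)) ≤ w * (θ^(x+2*y+t) * (1-θ)^(x+2*z+t)) := by
  have e1 : x+2*y+t = (2*x+y+z) + ((y+t)-(x+z)) := by omega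
  have e2 : y+z+2*t = (x+2*z+t) + ((y+t)-(x+z)) := by omega
  have hk : 1 ≤ (y+t)-(x+z) := by omega
  have key := ineq2 hw0 hw1 hθ hθ1 h2 hk
  have hPQ : (0:ℝ) ≤ θ^(2*x+y+z) * (1-θ)^(x+2*z+t) :=
    mul_nonneg (by positivity) (pow_nonneg (by linarith) _)
  calc 2 * (1-w) * (θ^(2*x+y+z) * (1-θ)^(y+z+2*t))
      = (θ^(2*x+y+z) * (1-θ)^(x+2*z+t)) * (2*(1-w) * (1-θ)^((y+t)-(x+z))) := by
        rw [e2, pow_add]; ring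
    _ ≤ (θ^(2*x+y+z) * (1-θ)^(x+2*z+t)) * (w * θ^((y+t)-(x+z))) :=
        mul_le_mul_of_nonneg_left key hPQ
    _ = w * (θ^(x+2*y+t) * (1-θ)^(x+2*z+t)) := by
        rw [e1, pow_add]; ring

-- infrastructure
lemma fin2 (a : Fin 2) : a = 0 ∨ a = 1 := by omega

lemma mem_tables {n : ℕ} {T : ℕ × ℕ × ℕ × ℕ} : T ∈ tables n ↔ tsum4 T = n := by
  obtain ⟨x, y, z, t⟩ := T
  rw [tables, Finset.mem_filter]
  simp only [tables, Finset.mem_filter, Finset.mem_product, Finset.mem_range, tsum4]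
  constructor
  · rintro ⟨_, h⟩; exact h
  · intro h; refine ⟨⟨?_, ?_, ?_, ?_⟩, h⟩ <;> simp at * <;> omega

lemma rulePB_zero {T : ℕ × ℕ × ℕ × ℕ} (h : rulePB T = 0) :
    ¬(T.2.2.1 + T.2.2.2 < T.1 + T.2.1 ∧ T.2.1 + T.2.2.2 < T.1 + T.2.2.1) := by
  intro hc; simp only [rulePB, if_pos hc] at h; exact one_ne_zero h

lemma rulePB_one {T : ℕ × ℕ × ℕ × ℕ} (h : rulePB T = 1) :
    T.2.2.1 + T.2.2.2 < T.1 + T.2.1 ∧ T.2.1 + T.2.2.2 < T.1 + T.2.2.1 := by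
  by_contra hc; simp only [rulePB, if_neg hc] at h; exact zero_ne_one h

lemma rulePB_swap (x y z t : ℕ) : rulePB (x, z, y, t) = rulePB (x, y, z, t) := by
  simp only [rulePB]
  by_cases h : z + t < x + y ∧ y + t < x + z
  · rw [if_pos h, if_pos ⟨h.2, h.1⟩]
  · rw [if_neg (fun hc => h ⟨hc.2, hc.1⟩), if_neg h]

lemma mcoef_swap (n x y z t : ℕ) : mcoef n (x, z, y, t) = mcoef n (x, y, z, t) := by
  simp only [mcoef]; ring

lemma mcoef_nonneg (n : ℕ) (T : ℕ × ℕ × ℕ × ℕ) : 0 ≤ mcoef n T := by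
  unfold mcoef; positivity

-- the key pair inequality
lemma pairsum {w θ : ℝ} (hw0 : 0 < w) (hw1 : w < 1) (hθ : 1/2 < θ) (hθ1 : θ < 1)
    (h2 : 2 * (1 - w) / (2 - w) ≤ θ)
    (x y z t : ℕ) (hodd : (x+y+z+t) % 2 = 1)
    (hpb : ¬(z + t < x + y ∧ y + t < x + z)) :
    0 ≤ (w * (θ^(x+2*y+t) * (1-θ)^(x+2*z+t)) - (1-w) * (θ^(2*x+y+z) * (1-θ)^(y+z+2*t)))
      + (w * (θ^(x+2*z+t) * (1-θ)^(x+2*y+t)) - (1-w) * (θ^(2*x+z+y) * (1-θ)^(z+y+2*t))) := by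
  have hq0 : (0:ℝ) ≤ 1 - θ := by linarith
  have key : (z ≤ y ∧ x + z < y + t) ∨ (y ≤ z ∧ x + y < z + t) := by omega
  rcases key with ⟨hzy, hlt⟩ | ⟨hyz, hlt⟩
  · have h := gge hw0 hw1 hθ hθ1 h2 x y z t hlt
    have hB : (2*x+z+y) = 2*x+y+z := by omega
    have hB2 : (z+y+2*t) = y+z+2*t := by omega
    rw [hB, hB2]
    have hA2 : (0:ℝ) ≤ w * (θ^(x+2*z+t) * (1-θ)^(x+2*y+t)) := by positivity
    linarith
  · have h := gge hw0 hw1 hθ hθ1 h2 x z y t hlt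
    have hB : (2*x+z+y) = 2*x+y+z := by omega
    have hB2 : (z+y+2*t) = y+z+2*t := by omega
    rw [hB, hB2] at h ⊢
    have hA1 : (0:ℝ) ≤ w * (θ^(x+2*y+t) * (1-θ)^(x+2*z+t)) := by positivity
    linarith

noncomputable def fA (θ : ℝ) (T : ℕ × ℕ × ℕ × ℕ) : ℝ :=
  θ ^ (T.1 + 2*T.2.1 + T.2.2.2) * (1-θ) ^ (T.1 + 2*T.2.2.1 + T.2.2.2)

noncomputable def fB (θ : ℝ) (T : ℕ × ℕ × ℕ × ℕ) : ℝ :=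
  θ ^ (2*T.1 + T.2.1 + T.2.2.1) * (1-θ) ^ (T.2.1 + T.2.2.1 + 2*T.2.2.2)

lemma loss_eq (n : ℕ) (w θ : ℝ) (r : ℕ × ℕ × ℕ × ℕ → Fin 2) :
    loss n w θ r = ∑ T ∈ tables n,
      (if r T = 1 then w * (mcoef n T * fA θ T) else (1-w) * (mcoef n T * fB θ T)) := by
  rw [loss, Finset.mul_sum, Finset.mul_sum, Finset.sum_filter, Finset.sum_filter,
    ← Finset.sum_add_distrib]
  refine Finset.sum_congr rfl fun T _ => ?_
  rcases fin2 (r T) with h | h <;> simp [h, fA, fB, mul_assoc]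

set_option maxHeartbeats 1600000 in
theorem premissBased_optimal_aux
    (w : ℝ) (hw0 : 0 < w) (hw1 : w < 1)
    (θ : ℝ) (hθ : 1/2 < θ) (hθ1 : θ < 1)
    (h1 : w ≤ θ) (h2 : 2 * (1 - w) / (2 - w) ≤ θ) :
    ∀ n m : ℕ, 1 ≤ m → n = 2 * m + 1 →
      ∀ r : ℕ × ℕ × ℕ × ℕ → Fin 2, (∀ x y z t : ℕ, x + y + z + t = n → r (x, y, z, t) = r (x, z, y, t)) →
        loss n w θ rulePB ≤ loss n w θ r := by
  intro n m hm hn r hsym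
  set g : ℕ × ℕ × ℕ × ℕ → ℝ :=
    fun T => mcoef n T * (w * fA θ T - (1-w) * fB θ T) with hg
  set D := (tables n).filter (fun T => rulePB T = 0 ∧ r T = 1) with hD
  have step1 : ∑ T ∈ D, g T ≤ loss n w θ r - loss n w θ rulePB := by
    rw [loss_eq, loss_eq, ← Finset.sum_sub_distrib, hD, Finset.sum_filter]
    refine Finset.sum_le_sum fun T hT => ?_
    obtain ⟨x, y, z, t⟩ := T
    rcases fin2 (rulePB (x,y,z,t)) with hp | hp <;> rcases fin2 (r (x,y,z,t)) with hrt | hrt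
    · simp [hp, hrt]
    · simp only [hp, hrt]
      norm_num
      exact le_of_eq (by rw [hg]; ring)
    · -- pb = 1, r = 0
      simp only [hp, hrt]
      norm_num
      have hd : y + t < x + z := (rulePB_one hp).2
      have hle := gle hw0 hw1 hθ hθ1 h1 x y z t hd
      have hmn := mcoef_nonneg n (x,y,z,t)
      have := mul_le_mul_of_nonneg_left hle hmn
      simp only [fA, fB]
      nlinarith [this]
    · simp [hp, hrt]
  have hswapmem : ∀ T ∈ D, (T.1, T.2.2.1, T.2.1, T.2.2.2) ∈ D := by
    rintro ⟨x, y, z, t⟩ hT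
    rw [hD, Finset.mem_filter] at hT ⊢
    obtain ⟨htab, hpb, hr1⟩ := hT
    have hsum : x + y + z + t = n := by
      have := mem_tables.1 htab; simpa [tsum4] using this
    refine ⟨mem_tables.2 (by simp [tsum4]; omega), ?_, ?_⟩
    · show rulePB (x, z, y, t) = 0
      rw [rulePB_swap]; exact hpb
    · show r (x, z, y, t) = 1
      rw [← hsym x y z t hsum]; exact hr1
  have hswap : ∑ T ∈ D, g (T.1, T.2.2.1, T.2.1, T.2.2.2) = ∑ T ∈ D, g T := by
    refine Finset.sum_nbij' (i := fun T : ℕ×ℕ×ℕ×ℕ => (T.1, T.2.2.1, T.2.1, T.2.2.2))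
      (j := fun T : ℕ×ℕ×ℕ×ℕ => (T.1, T.2.2.1, T.2.1, T.2.2.2)) hswapmem hswapmem
      (fun a _ => rfl) (fun a _ => rfl) (fun a _ => rfl)
  have hpair : ∀ T ∈ D, 0 ≤ g T + g (T.1, T.2.2.1, T.2.1, T.2.2.2) := by
    rintro ⟨x, y, z, t⟩ hT
    rw [hD, Finset.mem_filter] at hT
    obtain ⟨htab, hpb, hr1⟩ := hT
    have hsum : x + y + z + t = n := by
      have := mem_tables.1 htab; simpa [tsum4] using this
    have hodd : (x+y+z+t) % 2 = 1 := by omega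
    have hnpb : ¬(z + t < x + y ∧ y + t < x + z) := rulePB_zero hpb
    have hps := pairsum hw0 hw1 hθ hθ1 h2 x y z t hodd hnpb
    have hmn := mcoef_nonneg n (x,y,z,t)
    have hmn2 := mul_nonneg hmn hps
    rw [hg]
    show (0:ℝ) ≤ mcoef n (x,y,z,t) * (w * fA θ (x,y,z,t) - (1-w) * fB θ (x,y,z,t))
      + mcoef n (x,z,y,t) * (w * fA θ (x,z,y,t) - (1-w) * fB θ (x,z,y,t))
    rw [mcoef_swap n x y z t]
    simp only [fA, fB]
    nlinarith [hmn2]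
  have step2 : 0 ≤ ∑ T ∈ D, g T := by
    have h0 : 0 ≤ ∑ T ∈ D, (g T + g (T.1, T.2.2.1, T.2.1, T.2.2.2)) :=
      Finset.sum_nonneg hpair
    rw [Finset.sum_add_distrib, hswap] at h0
    linarith
  linarith

/-- If `θ ≥ w` and `θ ≥ 2(1−w)/(2−w)`, then the premiss-based rule is optimal for
every odd committee size `n = 2m+1`, `m ≥ 1`. -/
theorem premissBased_optimal_sufficient
    (w : ℝ) (hw0 : 0 < w) (hw1 : w < 1)
    (θ : ℝ) (hθ : 1/2 < θ) (hθ1 : θ < 1)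
    (h1 : w ≤ θ) (h2 : 2 * (1 - w) / (2 - w) ≤ θ) :
    ∀ n m : ℕ, 1 ≤ m → n = 2 * m + 1 →
      ∀ r : ℕ × ℕ × ℕ × ℕ → Fin 2, Admissible n r →
        loss n w θ rulePB ≤ loss n w θ r := by
  intro n m hm hn r hr
  exact premissBased_optimal_aux w hw0 hw1 θ hθ hθ1 h1 h2 n m hm hn r hr.1
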